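/- Let φ : ℕ^d → 𝕋 = ℝ ∪ {∞} be the coefficients of a tropical formal power series, defining φ(x) = inf_{I ∈ ℕ^d}(φ_I + ⟨I,x⟩) ∈ 𝕋 for x ∈ ℝ^d. Then the following are equivalent: (i) φ is convergent at ∞, i.e. there exist M ∈ ℝ and a finite subset S ⊆ ℕ^d such that for every x ∈ ℝ^d with x_j ≥ M for all j, inf_{I ∈ ℕ^d}(φ_I + ⟨I,x⟩) = min_{I ∈ S}(φ_I + ⟨I,x⟩); (ii) there exists α ∈ ℝ such that φ_I + α·|I| → ∞ as |I| → ∞, where |I| = I_1 + ⋯ + I_d, i.e. for every C ∈ ℝ only finitely many I ∈ ℕ^d satisfy φ_I + α|I| ≤ C. (This is the criterion, established in the paper's Proposition, characterizing exactly those tropical power series that arise as tropicalizations of convergent analytic germs over a non-archimedean valued field: over such a field a power series Σ φ̂_I x^I converges near 0 if and only if condition (ii) holds for the valuations φ_I = ν₀(φ̂_I).) -/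

import Mathlib

open Finset Function

-- auxiliary: Dickson-type finiteness of the "record" set
private lemma record_finite {d : ℕ} (ψ : (Fin d → ℕ) → WithTop ℝ)
    (hα : ∀ C : ℝ, {I : Fin d → ℕ | ψ I ≤ (C : WithTop ℝ)}.Finite) :
    {I : Fin d → ℕ | ∀ J, J < I → ψ I < ψ J}.Finite := by
  by_contra hnf
  have hBi : {I : Fin d → ℕ | ∀ J, J < I → ψ I < ψ J}.Infinite := hnf
  set f0 := hBi.natEmbedding
  have hPWO : (Set.univ : Set (Fin d → ℕ)).IsPWO := Set.isPWO_univ_iff.2 inferInstance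
  obtain ⟨g, hg⟩ := hPWO.exists_monotone_subseq (f := fun n => (f0 n : Fin d → ℕ))
    (fun n => Set.mem_univ _)
  set h : ℕ → Fin d → ℕ := fun n => (f0 (g n) : Fin d → ℕ) with hh
  have hinj : Function.Injective h := by
    intro m n e
    exact g.injective (Subtype.coe_injective e |> f0.injective)
  have hmem : ∀ n, h n ∈ {I : Fin d → ℕ | ∀ J, J < I → ψ I < ψ J} := fun n => (f0 (g n)).2
  have hlt : ∀ m n, m < n → h m < h n := by
    intro m n hmn
    exact lt_of_le_of_ne (hg hmn.le) (fun e => (hmn.ne (hinj e)))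
  have h1top : ψ (h 1) < ⊤ := by
    have := hmem 1 (h 0) (hlt 0 1 one_pos)
    exact lt_of_lt_of_le this le_top
  obtain ⟨C, hC⟩ := WithTop.ne_top_iff_exists.1 h1top.ne
  have hsub : ∀ k : ℕ, h (k + 2) ∈ {I : Fin d → ℕ | ψ I ≤ (C : WithTop ℝ)} := by
    intro k
    have := hmem (k + 2) (h 1) (hlt 1 (k + 2) (by omega))
    rw [hC]
    exact this.le
  have hInf : {I : Fin d → ℕ | ψ I ≤ (C : WithTop ℝ)}.Infinite :=
    Set.infinite_of_injective_forall_mem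
      (f := fun k : ℕ => h (k + 2))
      (fun a b e => by simpa using hinj e) hsub
  exact hInf (hα C)

private lemma descend {d : ℕ} (ψ : (Fin d → ℕ) → WithTop ℝ) :
    ∀ n (I : Fin d → ℕ), (∑ j, I j) = n →
      ∃ I', (∀ J, J < I' → ψ I' < ψ J) ∧ I' ≤ I ∧ ψ I' ≤ ψ I := by
  intro n
  induction n using Nat.strong_induction_on with
  | _ n ih =>
    intro I hI
    by_cases hIB : ∀ J, J < I → ψ I < ψ J
    · exact ⟨I, hIB, le_refl I, le_refl _⟩
    · push_neg at hIB
      obtain ⟨J, hJI, hJψ⟩ := hIB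
      obtain ⟨hle, i, hi⟩ := Pi.lt_def.1 hJI
      have hsum : (∑ j, J j) < n := by
        rw [← hI]
        exact Finset.sum_lt_sum (fun j _ => hle j) ⟨i, Finset.mem_univ i, hi⟩
      obtain ⟨I', hI'B, hI'J, hI'ψ⟩ := ih _ hsum J rfl
      exact ⟨I', hI'B, hI'J.trans hJI.le, hI'ψ.trans hJψ⟩

/-- A tropical formal power series `φ(x) = inf_{I∈ℕ^d}(φ_I + ⟨I,x⟩)` (values
in `𝕋 = WithTop ℝ`) is convergent at `∞` — i.e. on the region where all coordinates are large
enough, the infimum over all of `ℕ^d` equals the minimum over some fixed finite set `S ⊆ ℕ^d`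
(stated as: the minimum over `S` is a lower bound for all the values `φ_I + ⟨I,x⟩`) — if and
only if there is `α ∈ ℝ` such that `φ_I + α·|I| → ∞` as `|I| → ∞`, i.e. for every `C ∈ ℝ`
only finitely many `I ∈ ℕ^d` satisfy `φ_I + α|I| ≤ C`. -/
theorem tropical_series_convergent_iff {d : ℕ}
    (φ : (Fin d → ℕ) → WithTop ℝ) :
    (∃ M : ℝ, ∃ S : Finset (Fin d → ℕ), ∃ hS : S.Nonempty,
        ∀ x : Fin d → ℝ, (∀ j, M ≤ x j) →
          ∀ I : Fin d → ℕ,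
            (S.inf' hS fun I' => φ I' + ((∑ j, (I' j : ℝ) * x j : ℝ) : WithTop ℝ))
              ≤ φ I + ((∑ j, (I j : ℝ) * x j : ℝ) : WithTop ℝ)) ↔
      (∃ α : ℝ, ∀ C : ℝ,
        {I : Fin d → ℕ |
            φ I + ((α * (∑ j, (I j : ℕ) : ℕ) : ℝ) : WithTop ℝ) ≤ (C : WithTop ℝ)}.Finite) := by
  constructor
  · rintro ⟨M, S, hS, h⟩
    refine ⟨M + 1, fun C => ?_⟩
    have key' := h (fun _ => M) (fun j => le_refl M)
    have key : ∀ I : Fin d → ℕ,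
        (S.inf' hS fun I' => φ I' + ((∑ j, (I' j : ℝ) * M : ℝ) : WithTop ℝ))
          ≤ φ I + ((∑ j, (I j : ℝ) * M : ℝ) : WithTop ℝ) := key'
    set m := S.inf' hS fun I' => φ I' + ((∑ j, (I' j : ℝ) * M : ℝ) : WithTop ℝ) with hm
    cases hmt : m with
    | top =>
      have hempty : {I : Fin d → ℕ |
          φ I + (((M + 1) * (∑ j, (I j : ℕ) : ℕ) : ℝ) : WithTop ℝ) ≤ (C : WithTop ℝ)} = ∅ := by
        ext I
        simp only [Set.mem_setOf_eq, Set.mem_empty_iff_false, iff_false]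
        intro hle
        have hI := key I
        rw [hmt] at hI
        have hφtop : φ I = ⊤ := by
          by_contra hφ
          obtain ⟨a, ha⟩ := WithTop.ne_top_iff_exists.1 hφ
          rw [← ha, ← WithTop.coe_add] at hI
          exact (WithTop.coe_lt_top _).not_ge hI
        rw [hφtop] at hle
        simp at hle
      rw [hempty]; exact Set.finite_empty
    | coe r =>
      apply Set.Finite.subset (Set.finite_Icc (0 : Fin d → ℕ) (fun _ => ⌊C - r⌋₊))
      intro I hI
      simp only [Set.mem_setOf_eq] at hI
      have hφ : φ I ≠ ⊤ := by
        intro e; rw [e] at hI; simp at hI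
      obtain ⟨p, hp⟩ := WithTop.ne_top_iff_exists.1 hφ
      rw [← hp, ← WithTop.coe_add, WithTop.coe_le_coe] at hI
      have hkey := key I
      rw [hmt, ← hp, ← WithTop.coe_add, WithTop.coe_le_coe] at hkey
      have hsumM : (∑ j, (I j : ℝ) * M) = ((∑ j, I j : ℕ) : ℝ) * M := by
        push_cast; rw [Finset.sum_mul]
      rw [hsumM] at hkey
      have hIbound : ((∑ j, I j : ℕ) : ℝ) ≤ C - r := by nlinarith
      refine Set.mem_Icc.2 ⟨fun j => Nat.zero_le _, fun j => Nat.le_floor ?_⟩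
      calc ((I j : ℝ)) ≤ ((∑ j, I j : ℕ) : ℝ) := by
            exact_mod_cast Finset.single_le_sum (f := fun j => I j)
              (fun j _ => Nat.zero_le _) (Finset.mem_univ j)
        _ ≤ C - r := hIbound
  · rintro ⟨α, hα⟩
    set ψ : (Fin d → ℕ) → WithTop ℝ :=
      fun I => φ I + ((α * (∑ j, (I j : ℕ) : ℕ) : ℝ) : WithTop ℝ) with hψ
    have hBfin := record_finite ψ hα
    have hstep := descend ψ
    classical
    refine ⟨α, insert (fun _ => 0) hBfin.toFinset, Finset.insert_nonempty _ _, ?_⟩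
    intro x hx I
    obtain ⟨I', hI'B, hI'le, hI'ψ⟩ := hstep (∑ j, I j) I rfl
    have hI'S : I' ∈ insert (fun _ => (0:ℕ)) hBfin.toFinset :=
      Finset.mem_insert_of_mem (hBfin.mem_toFinset.2 hI'B)
    refine le_trans (Finset.inf'_le _ hI'S) ?_
    cases hφI : φ I with
    | top => simp [hφI]
    | coe b =>
      have hI'ψ2 : φ I' + ((α * ((∑ j, I' j : ℕ) : ℝ) : ℝ) : WithTop ℝ)
          ≤ φ I + ((α * ((∑ j, I j : ℕ) : ℝ) : ℝ) : WithTop ℝ) := hI'ψ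
      have hφ' : φ I' ≠ ⊤ := by
        intro e
        rw [e, hφI, top_add, ← WithTop.coe_add, top_le_iff] at hI'ψ2
        exact (WithTop.coe_ne_top) hI'ψ2
      obtain ⟨a, ha⟩ := WithTop.ne_top_iff_exists.1 hφ'
      rw [← ha, hφI, ← WithTop.coe_add, ← WithTop.coe_add, WithTop.coe_le_coe] at hI'ψ2
      rw [← ha, ← WithTop.coe_add, ← WithTop.coe_add, WithTop.coe_le_coe]
      -- real arithmetic
      have hs : ∀ j ∈ Finset.univ, (I' j : ℝ) * (x j - α) ≤ (I j : ℝ) * (x j - α) :=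
        fun j _ => mul_le_mul_of_nonneg_right (by exact_mod_cast hI'le j)
          (sub_nonneg.2 (hx j))
      have hsum := Finset.sum_le_sum hs
      simp only [mul_sub, Finset.sum_sub_distrib] at hsum
      have e1 : (∑ j, (I' j : ℝ) * α) = α * ((∑ j, I' j : ℕ) : ℝ) := by
        push_cast; rw [Finset.mul_sum]; exact Finset.sum_congr rfl fun j _ => mul_comm _ _
      have e2 : (∑ j, (I j : ℝ) * α) = α * ((∑ j, I j : ℕ) : ℝ) := by
        push_cast; rw [Finset.mul_sum]; exact Finset.sum_congr rfl fun j _ => mul_comm _ _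
      rw [e1, e2] at hsum
      linarith [hI'ψ2]
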